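/- For real constants a+b < 0, c, ν > 0, ω > 0, φ, the function θ(t) = (2cν/(ν²(a+b)²+ω²))·(ν(a+b)sin(ωt+φ/2) + ω cos(ωt+φ/2))·cos(φ/2) satisfies θ̇(t) = cν[(α₋(t) − sin ωt) + (α₊(t) − sin(ωt+φ))] for the periodic steady-state shape solution α₋, α₊ of the linearized system, i.e., θ is the periodic steady-state orientation response. -/

import Mathlib

open Real

/-- the explicit harmonic θ is the periodic steady-state orientation
response: it satisfies θ̇ = cν[(α₋ − sin ωt) + (α₊ − sin(ωt+φ))] whenever α₋, α₊
is the periodic steady-state solution of the linearized shape system. -/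
theorem stmt4 (ν a b c ω φ : ℝ) (hν : 0 < ν) (hω : 0 < ω) (hab : a + b < 0)
    (αm αp : ℝ → ℝ)
    (hαm : ∀ t, HasDerivAt αm
        (ν * (a * (αm t - sin (ω * t)) + b * (αp t - sin (ω * t + φ)))) t)
    (hαp : ∀ t, HasDerivAt αp
        (ν * (b * (αm t - sin (ω * t)) + a * (αp t - sin (ω * t + φ)))) t)
    (hper : Function.Periodic αm (2 * π / ω) ∧ Function.Periodic αp (2 * π / ω))
    (θ : ℝ → ℝ)
    (hθ : θ = fun t => (2 * c * ν / (ν^2 * (a + b)^2 + ω^2)) *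
        (ν * (a + b) * sin (ω * t + φ / 2) + ω * cos (ω * t + φ / 2)) * cos (φ / 2)) :
    ∀ t, HasDerivAt θ
      (c * ν * ((αm t - sin (ω * t)) + (αp t - sin (ω * t + φ)))) t := by
  obtain ⟨hpm, hpp⟩ := hper
  have hω' : ω ≠ 0 := ne_of_gt hω
  set k : ℝ := ν * (a + b) with hk
  have hklt : k < 0 := mul_neg_of_pos_of_neg hν hab
  have hD : (0:ℝ) < k^2 + ω^2 := by positivity
  have hDne : k^2 + ω^2 ≠ 0 := ne_of_gt hD
  set F : ℝ → ℝ := fun t => (2*ω/(k^2+ω^2)) * (k * cos (ω*t+φ/2) - ω * sin (ω*t+φ/2)) * cos (φ/2) with hF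
  set f : ℝ → ℝ := fun t => (αm t - sin (ω*t)) + (αp t - sin (ω*t+φ)) with hf
  have hlin : ∀ t : ℝ, HasDerivAt (fun s : ℝ => ω * s) ω t := fun t => by
    simpa using (hasDerivAt_id t).const_mul ω
  have hs1 : ∀ t : ℝ, HasDerivAt (fun s => sin (ω*s)) (ω * cos (ω*t)) t := fun t => by
    simpa [mul_comm] using (hlin t).sin
  have hcos : ∀ ψ : ℝ, ∀ t : ℝ, HasDerivAt (fun s => cos (ω*s+ψ)) (-(ω * sin (ω*t+ψ))) t := fun ψ t => by
    simpa [mul_comm] using ((hlin t).add_const ψ).cos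
  have hsin : ∀ ψ : ℝ, ∀ t : ℝ, HasDerivAt (fun s => sin (ω*s+ψ)) (ω * cos (ω*t+ψ)) t := fun ψ t => by
    simpa [mul_comm] using ((hlin t).add_const ψ).sin
  -- derivative of f
  have hf' : ∀ t, HasDerivAt f (k * f t - (ω * cos (ω*t) + ω * cos (ω*t+φ))) t := fun t => by
    have h := ((hαm t).sub (hs1 t)).add ((hαp t).sub (hsin φ t))
    refine h.congr_deriv ?_
    simp only [hf, hk]; ring
  -- derivative of F
  have hF' : ∀ t, HasDerivAt F (k * F t - (ω * cos (ω*t) + ω * cos (ω*t+φ))) t := fun t => by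
    have hd : HasDerivAt F ((2*ω/(k^2+ω^2)) * (k * (-(ω * sin (ω*t+φ/2))) - ω * (ω * cos (ω*t+φ/2))) * cos (φ/2)) t :=
      ((((hcos (φ/2) t).const_mul k).sub ((hsin (φ/2) t).const_mul ω)).const_mul _).mul_const _
    convert hd using 1
    have key2 : ∀ x y : ℝ, cos (x - y) + cos (x + y) = 2 * cos x * cos y := fun x y => by
      rw [cos_sub, cos_add]; ring
    have htrig : cos (ω*t) + cos (ω*t+φ) = 2 * cos (ω*t+φ/2) * cos (φ/2) := by
      have h := key2 (ω*t+φ/2) (φ/2)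
      rw [show ω*t+φ/2 - φ/2 = ω*t by ring, show ω*t+φ/2 + φ/2 = ω*t+φ by ring] at h
      exact h
    rw [show ω * cos (ω*t) + ω * cos (ω*t+φ) = ω * (cos (ω*t) + cos (ω*t+φ)) by ring, htrig]
    simp only [hF]
    field_simp
    ring
  -- h = f - F satisfies h' = k h, so h t = h 0 * exp(k t)
  have hu : ∀ t, HasDerivAt (fun s => (f s - F s) * exp (-(k*s))) 0 t := fun t => by
    have h1 : HasDerivAt (fun s => f s - F s) (k * (f t - F t)) t := by
      have h := (hf' t).sub (hF' t); refine h.congr_deriv ?_; ring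
    have h2 : HasDerivAt (fun s : ℝ => exp (-(k*s))) (-k * exp (-(k*t))) t := by
      have := (((hasDerivAt_id t).const_mul k).neg).exp
      simpa [mul_comm] using this
    have h := h1.mul h2
    refine h.congr_deriv ?_; ring
  have hconst : ∀ t, (f t - F t) * exp (-(k*t)) = (f 0 - F 0) := by
    intro t
    have := is_const_of_deriv_eq_zero (f := fun s => (f s - F s) * exp (-(k*s)))
      (fun s => (hu s).differentiableAt) (fun s => (hu s).deriv) t 0
    simpa using this
  have hformula : ∀ t, f t - F t = (f 0 - F 0) * exp (k*t) := by
    intro t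
    have h := hconst t
    have he : exp (-(k*t)) ≠ 0 := exp_ne_zero _
    field_simp [exp_neg] at h ⊢
    rw [← h, mul_assoc, ← exp_add]; simp
  -- periodicity forces f 0 = F 0
  have hT : ω * (2*π/ω) = 2*π := by field_simp
  have hfper : f (2*π/ω) = f 0 := by
    have hm : αm (2*π/ω) = αm 0 := by simpa using hpm 0
    have hp : αp (2*π/ω) = αp 0 := by simpa using hpp 0
    simp only [hf, hm, hp, mul_zero, hT]
    rw [show (2*π+φ) = φ + 2*π by ring, sin_add_two_pi, sin_two_pi, zero_add, sin_zero]
  have hFper : F (2*π/ω) = F 0 := by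
    simp only [hF, hT, mul_zero, zero_add]
    rw [show (2*π+φ/2) = φ/2 + 2*π by ring, sin_add_two_pi, cos_add_two_pi]
  have h0 : f 0 - F 0 = 0 := by
    have h := hformula (2*π/ω)
    rw [hfper, hFper] at h
    by_contra hne
    have hexp : exp (k * (2*π/ω)) = 1 := by
      have h' : (f 0 - F 0) * exp (k * (2*π/ω)) = (f 0 - F 0) * 1 := by
        rw [mul_one]; exact h.symm
      exact mul_left_cancel₀ hne h'
    have hkT : k * (2*π/ω) < 0 := by
      apply mul_neg_of_neg_of_pos hklt
      positivity
    have : exp (k * (2*π/ω)) < 1 := exp_lt_one_iff.mpr hkT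
    rw [hexp] at this; exact lt_irrefl 1 this
  have key : ∀ t, f t = F t := by
    intro t
    have h := hformula t
    rw [h0, zero_mul] at h
    linarith
  -- conclude
  intro t
  have hk2 : ν^2*(a+b)^2 = k^2 := by rw [hk]; ring
  rw [hk2] at hθ
  subst hθ
  have hθ' : HasDerivAt (fun t => (2 * c * ν / (k^2 + ω^2)) *
      (k * sin (ω * t + φ / 2) + ω * cos (ω * t + φ / 2)) * cos (φ / 2))
      ((2 * c * ν / (k^2 + ω^2)) *
      (k * (ω * cos (ω * t + φ / 2)) + ω * (-(ω * sin (ω * t + φ / 2)))) * cos (φ / 2)) t :=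
    ((((hsin (φ/2) t).const_mul k).add ((hcos (φ/2) t).const_mul ω)).const_mul _).mul_const _
  have hval : c * ν * ((αm t - sin (ω * t)) + (αp t - sin (ω * t + φ))) =
      (2 * c * ν / (k^2 + ω^2)) *
      (k * (ω * cos (ω * t + φ / 2)) + ω * (-(ω * sin (ω * t + φ / 2)))) * cos (φ / 2) := by
    have : c * ν * f t = c * ν * F t := by rw [key t]
    simp only [hf, hF] at this
    rw [this]
    field_simp
    ring
  rw [hval]
  exact hθ'
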